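/- The δ-vector of any lattice parallelepiped is unimodal. That is, if P = conv(v_0,...,v_r) is a simplex spanned by linearly independent lattice vectors and ◊P = {Σ λ_i v_i : 0 ≤ λ_i ≤ 1}, then the coefficients of δ(◊P, t) = (1-t)^{r+2} Σ_{n≥0} #(n◊P ∩ Z^m) t^n form a unimodal sequence. -/

import Mathlib

open PowerSeries

noncomputable def Wc (a b k : ℕ) : ℤ :=
  PowerSeries.coeff (R := ℤ) k ((1 - PowerSeries.X) ^ (a + b + 1) *
    PowerSeries.mk (fun n : ℕ => (n : ℤ) ^ a * ((n : ℤ) + 1) ^ b))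

lemma Wc_zero (a b : ℕ) : Wc a b 0 = (0 : ℤ) ^ a := by
  unfold Wc
  rw [PowerSeries.coeff_zero_eq_constantCoeff, map_mul, map_pow, map_sub, map_one,
    PowerSeries.constantCoeff_X, PowerSeries.constantCoeff_mk]
  simp

lemma Wc_zero_zero (k : ℕ) : Wc 0 0 k = if k = 0 then 1 else 0 := by
  have h : (1 - PowerSeries.X) * PowerSeries.mk (fun n : ℕ => (n : ℤ) ^ 0 * ((n : ℤ) + 1) ^ 0)
      = 1 := by
    have h2 := PowerSeries.mk_one_mul_one_sub_eq_one (S := ℤ)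
    rw [mul_comm] at h2
    have h3 : PowerSeries.mk (fun n : ℕ => (n : ℤ) ^ 0 * ((n : ℤ) + 1) ^ 0)
        = PowerSeries.mk (1 : ℕ → ℤ) := by
      apply PowerSeries.ext; intro n
      simp [PowerSeries.coeff_mk]
    rw [h3]; exact h2
  unfold Wc
  rw [pow_one, h]
  simp [PowerSeries.coeff_one]

-- derivative of (1-X)^(n+1)
lemma deriv_one_sub_pow (n : ℕ) :
    PowerSeries.derivative ℤ ((1 - PowerSeries.X) ^ (n + 1))
      = -((n + 1 : ℕ) • ((1 - PowerSeries.X) ^ n)) := by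
  rw [Derivation.leibniz_pow]
  have h : PowerSeries.derivative ℤ (1 - PowerSeries.X) = -1 := by
    rw [map_sub]
    simp
  rw [h]
  simp [smul_smul]

lemma mk_succ_mul (f : ℕ → ℤ) :
    PowerSeries.mk (fun n : ℕ => ((n : ℤ) + 1) * f n)
      = PowerSeries.derivative ℤ (PowerSeries.X * PowerSeries.mk f) := by
  apply PowerSeries.ext; intro n
  rw [PowerSeries.coeff_derivative, PowerSeries.coeff_succ_X_mul, PowerSeries.coeff_mk,
    PowerSeries.coeff_mk]
  push_cast; ring

lemma mk_n_mul (f : ℕ → ℤ) :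
    PowerSeries.mk (fun n : ℕ => (n : ℤ) * f n)
      = PowerSeries.X * PowerSeries.derivative ℤ (PowerSeries.mk f) := by
  apply PowerSeries.ext; intro n
  cases n with
  | zero => simp [PowerSeries.coeff_mk]
  | succ j =>
      rw [PowerSeries.coeff_succ_X_mul, PowerSeries.coeff_derivative, PowerSeries.coeff_mk,
        PowerSeries.coeff_mk]
      push_cast; ring

-- key algebraic identity, B version
lemma keyB (F : PowerSeries ℤ) (d : ℕ) :
    (1 - PowerSeries.X) ^ (d + 2) * PowerSeries.derivative ℤ (PowerSeries.X * F)
      = (1 - PowerSeries.X) * PowerSeries.derivative ℤ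
          (PowerSeries.X * ((1 - PowerSeries.X) ^ (d + 1) * F))
        + ((d : ℤ) + 1) • (PowerSeries.X * ((1 - PowerSeries.X) ^ (d + 1) * F)) := by
  have h1 : PowerSeries.derivative ℤ (PowerSeries.X * F)
      = PowerSeries.X * PowerSeries.derivative ℤ F + F := by
    rw [Derivation.leibniz]
    simp only [smul_eq_mul, nsmul_eq_mul, PowerSeries.derivative_X]
    ring
  have h2 : PowerSeries.derivative ℤ (PowerSeries.X * ((1 - PowerSeries.X) ^ (d + 1) * F))
      = PowerSeries.X * ((1 - PowerSeries.X) ^ (d + 1) * PowerSeries.derivative ℤ F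
          - F * ((d + 1 : ℕ) • ((1 - PowerSeries.X) ^ d)))
        + (1 - PowerSeries.X) ^ (d + 1) * F := by
    rw [Derivation.leibniz, Derivation.leibniz, deriv_one_sub_pow]
    simp only [smul_eq_mul, nsmul_eq_mul, PowerSeries.derivative_X]
    ring
  rw [h1, h2]
  simp only [nsmul_eq_mul, zsmul_eq_mul, smul_eq_mul]
  push_cast
  ring

lemma keyA (F : PowerSeries ℤ) (d : ℕ) :
    (1 - PowerSeries.X) ^ (d + 2) * (PowerSeries.X * PowerSeries.derivative ℤ F)
      = PowerSeries.X * ((1 - PowerSeries.X) * PowerSeries.derivative ℤ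
          ((1 - PowerSeries.X) ^ (d + 1) * F))
        + ((d : ℤ) + 1) • (PowerSeries.X * ((1 - PowerSeries.X) ^ (d + 1) * F)) := by
  have h2 : PowerSeries.derivative ℤ ((1 - PowerSeries.X) ^ (d + 1) * F)
      = (1 - PowerSeries.X) ^ (d + 1) * PowerSeries.derivative ℤ F
        - F * ((d + 1 : ℕ) • ((1 - PowerSeries.X) ^ d)) := by
    rw [Derivation.leibniz, deriv_one_sub_pow]
    simp only [smul_eq_mul, nsmul_eq_mul, PowerSeries.derivative_X]
    ring
  rw [h2]
  simp only [smul_eq_mul, nsmul_eq_mul, zsmul_eq_mul]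
  push_cast
  ring

lemma coeff_X_mul_deriv (A : PowerSeries ℤ) (k : ℕ) :
    PowerSeries.coeff (R := ℤ) k (PowerSeries.X * PowerSeries.derivative ℤ A)
      = (k : ℤ) * PowerSeries.coeff (R := ℤ) k A := by
  cases k with
  | zero => simp
  | succ j =>
      rw [PowerSeries.coeff_succ_X_mul, PowerSeries.coeff_derivative]
      push_cast; ring

lemma recB (a b k : ℕ) :
    Wc a (b + 1) (k + 1)
      = (k + 2 : ℤ) * Wc a b (k + 1) + ((a + b : ℤ) - k) * Wc a b k := by
  have hmk : PowerSeries.mk (fun n : ℕ => (n : ℤ) ^ a * ((n : ℤ) + 1) ^ (b + 1))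
      = PowerSeries.mk (fun n : ℕ => ((n : ℤ) + 1) * ((n : ℤ) ^ a * ((n : ℤ) + 1) ^ b)) := by
    apply PowerSeries.ext; intro n
    rw [PowerSeries.coeff_mk, PowerSeries.coeff_mk]
    ring
  unfold Wc
  rw [show a + (b + 1) + 1 = (a + b) + 2 by ring, hmk, mk_succ_mul, keyB _ (a + b)]
  set A := (1 - PowerSeries.X) ^ (a + b + 1) *
    PowerSeries.mk (fun n : ℕ => (n : ℤ) ^ a * ((n : ℤ) + 1) ^ b) with hA
  rw [map_add, map_smul]
  have h1 : (1 - PowerSeries.X) * PowerSeries.derivative ℤ (PowerSeries.X * A)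
      = PowerSeries.derivative ℤ (PowerSeries.X * A)
        - PowerSeries.X * PowerSeries.derivative ℤ (PowerSeries.X * A) := by ring
  rw [h1, map_sub]
  simp only [PowerSeries.coeff_derivative, PowerSeries.coeff_succ_X_mul, smul_eq_mul]
  push_cast
  ring

lemma recA (a b k : ℕ) :
    Wc (a + 1) b (k + 1)
      = (k + 1 : ℤ) * Wc a b (k + 1) + ((a + b : ℤ) + 1 - k) * Wc a b k := by
  have hmk : PowerSeries.mk (fun n : ℕ => (n : ℤ) ^ (a + 1) * ((n : ℤ) + 1) ^ b)
      = PowerSeries.mk (fun n : ℕ => (n : ℤ) * ((n : ℤ) ^ a * ((n : ℤ) + 1) ^ b)) := by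
    apply PowerSeries.ext; intro n
    rw [PowerSeries.coeff_mk, PowerSeries.coeff_mk]
    ring
  unfold Wc
  rw [show a + 1 + b + 1 = (a + b) + 2 by ring, hmk, mk_n_mul, keyA _ (a + b)]
  set A := (1 - PowerSeries.X) ^ (a + b + 1) *
    PowerSeries.mk (fun n : ℕ => (n : ℤ) ^ a * ((n : ℤ) + 1) ^ b) with hA
  rw [map_add, map_smul]
  have h1 : PowerSeries.X * ((1 - PowerSeries.X) * PowerSeries.derivative ℤ A)
      = PowerSeries.X * PowerSeries.derivative ℤ A
        - PowerSeries.X * (PowerSeries.X * PowerSeries.derivative ℤ A) := by ring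
  rw [h1, map_sub]
  simp only [PowerSeries.coeff_succ_X_mul, PowerSeries.coeff_derivative, coeff_X_mul_deriv,
    smul_eq_mul]
  push_cast
  ring

lemma Wc_support : ∀ a b k : ℕ, a + b < k → Wc a b k = 0 := by
  intro a
  induction a with
  | zero =>
      intro b
      induction b with
      | zero =>
          intro k hk
          rw [Wc_zero_zero]
          simp only [ite_eq_right_iff]
          intro h; omega
      | succ b ih =>
          intro k hk
          match k, hk with
          | k' + 1, hk =>
            rw [recB]
            rw [ih k' (by omega), ih (k' + 1) (by omega)]
            ring
  | succ a ih =>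
      intro b k hk
      match k, hk with
      | k' + 1, hk =>
        rw [recA]
        rw [ih b k' (by omega), ih b (k' + 1) (by omega)]
        ring

lemma Wc_nonneg : ∀ a b k : ℕ, 0 ≤ Wc a b k := by
  intro a
  have key : ∀ (W : ℕ → ℤ) (c : ℕ) (k : ℕ), (∀ j, 0 ≤ W j) → (∀ j, c < j → W j = 0) →
      ∀ (e : ℤ), (0 ≤ e) →
      0 ≤ e * W (k + 1) + ((c : ℤ) - k) * W k := by
    intro W c k hpos hsupp e he
    rcases le_or_gt (k : ℤ) (c : ℤ) with hkc | hkc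
    · have h1 : 0 ≤ e * W (k + 1) := mul_nonneg he (hpos _)
      have h2 : 0 ≤ ((c : ℤ) - k) * W k := mul_nonneg (by omega) (hpos _)
      linarith
    · have : W k = 0 := hsupp k (by exact_mod_cast hkc)
      rw [this, mul_zero, add_zero]
      exact mul_nonneg he (hpos _)
  induction a with
  | zero =>
      intro b
      induction b with
      | zero =>
          intro k; rw [Wc_zero_zero]
          split <;> norm_num
      | succ b ih =>
          intro k
          cases k with
          | zero => rw [Wc_zero]; positivity
          | succ k' =>
              rw [recB]
              exact key (Wc 0 b) (0 + b) k' ih (fun j hj => Wc_support 0 b j hj)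
                ((k' : ℤ) + 2) (by positivity)
  | succ a ih =>
      intro b k
      cases k with
      | zero => rw [Wc_zero]; positivity
      | succ k' =>
          rw [recA]
          have h2 : ((a : ℤ) + b + 1 - k') = ((a + b + 1 : ℕ) : ℤ) - (k' : ℤ) := by push_cast; ring
          rw [h2]
          exact key (Wc a b) (a + b + 1) k' (ih b)
            (fun j hj => Wc_support a b j (by omega)) ((k' : ℤ) + 1) (by positivity)

lemma Wc_symm : ∀ a b k j : ℕ, k + j = a + b → Wc a b k = Wc b a j := by
  intro a
  induction a with
  | zero =>
      intro b
      induction b with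
      | zero =>
          intro k j h
          have hk : k = 0 := by omega
          have hj : j = 0 := by omega
          subst hk; subst hj; rfl
      | succ b ih =>
          intro k j h
          cases k with
          | zero =>
              have hj : j = b + 1 := by omega
              subst hj
              rw [Wc_zero, recA, Wc_support b 0 (b + 1) (by omega),
                ← ih 0 b (by omega), Wc_zero]
              norm_num
          | succ k' =>
              cases j with
              | zero =>
                  have hb : b = k' := by omega
                  subst hb
                  rw [Wc_zero, recB, Wc_support 0 b (b + 1) (by omega),
                    ih b 0 (by omega), Wc_zero]
                  norm_num
              | succ j' =>
                  have hb : b = k' + j' + 1 := by omega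
                  subst hb
                  rw [recB, recA, ih (k' + 1) j' (by omega), ih k' (j' + 1) (by omega)]
                  push_cast
                  ring
  | succ a ih =>
      intro b k j h
      cases k with
      | zero =>
          have hj : j = a + 1 + b := by omega
          subst hj
          rw [Wc_zero]
          have hj' : a + 1 + b = (a + b) + 1 := by ring
          rw [hj', recB, Wc_support b a (a + b + 1) (by omega), zero_pow (by omega)]
          push_cast
          ring
      | succ k' =>
          cases j with
          | zero =>
              have hk : k' = a + b := by omega
              subst hk
              rw [recA, Wc_support a b (a + b + 1) (by omega), Wc_zero,
                ih b (a + b) 0 (by omega), Wc_zero]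
              push_cast
              ring
          | succ j' =>
              rw [recA, recB, ih b (k' + 1) j' (by omega), ih b k' (j' + 1) (by omega)]
              push_cast
              have hb : (b : ℤ) = (k' : ℤ) + j' + 1 - a := by omega
              rw [hb]
              ring

def GoodW (a b : ℕ) : Prop :=
  (∀ k j : ℕ, k + j + 1 = a + b → k ≤ j → Wc a b k ≤ Wc a b j) ∧
  (∀ k j : ℕ, k + j = a + b → k ≤ j → Wc a b j ≤ Wc a b k)

lemma good_inc {a b : ℕ} (h : GoodW a b) (k : ℕ) (hk : 2 * k + 2 ≤ a + b) :
    Wc a b k ≤ Wc a b (k + 1) := by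
  have h1 := h.1 k (a + b - 1 - k) (by omega) (by omega)
  have h2 := h.2 (k + 1) (a + b - 1 - k) (by omega) (by omega)
  calc Wc a b k ≤ Wc a b (a + b - 1 - k) := h1
    _ ≤ Wc a b (k + 1) := h2

lemma good_dec {a b : ℕ} (h : GoodW a b) (k : ℕ) (hk : a + b ≤ 2 * k + 1) :
    Wc a b (k + 1) ≤ Wc a b k := by
  rcases le_or_gt (a + b) k with hc | hc
  · rw [Wc_support a b (k + 1) (by omega)]
    exact Wc_nonneg a b k
  · have h1 := h.2 (a + b - 1 - k) (k + 1) (by omega) (by omega)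
    have h2 := h.1 (a + b - 1 - k) k (by omega) (by omega)
    calc Wc a b (k + 1) ≤ Wc a b (a + b - 1 - k) := h1
      _ ≤ Wc a b k := h2

lemma stepB {a b : ℕ} (hab : a ≤ b) (h : GoodW a b) : GoodW a (b + 1) := by
  constructor
  · -- increasing pairs: k + j + 1 = a + b + 1, k ≤ j
    intro k j hsum hkj
    rcases eq_or_lt_of_le hkj with heq | hlt
    · subst heq; exact le_refl _
    cases j with
    | zero => omega
    | succ j' =>
        cases k with
        | zero =>
            -- j' = a + b - 1, and a + b ≥ 1
            rw [Wc_zero, recB]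
            have hj' : j' + 1 = a + b := by omega
            have e1 : Wc a b 0 ≤ Wc a b j' := by
              rcases Nat.eq_zero_or_pos j' with h0 | h0
              · subst h0; exact le_refl _
              · exact h.1 0 j' (by omega) (by omega)
            have e2 : (0 : ℤ) ≤ ((j' : ℤ) + 2) * Wc a b (j' + 1) := by
              have := Wc_nonneg a b (j' + 1)
              positivity
            have e3 : ((a : ℤ) + b - j') = 1 := by omega
            rw [e3]
            have e4 : Wc a b 0 = (0 : ℤ) ^ a := Wc_zero a b
            rw [← e4]
            linarith
        | succ k' =>
            rw [recB, recB]
            have hkj' : k' + 1 ≤ j' := by omega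
            have hsum' : k' + j' + 2 = a + b := by omega
            have b1 := h.1 (k' + 1) j' (by omega) (by omega)
            have b2 := h.1 k' (j' + 1) (by omega) (by omega)
            have e1 : ((a : ℤ) + b - k') = (j' : ℤ) + 2 := by omega
            have e2 : ((a : ℤ) + b - j') = (k' : ℤ) + 2 := by omega
            rw [e1, e2]
            have c1 : ((k' : ℤ) + 2) * Wc a b (k' + 1) ≤ ((k' : ℤ) + 2) * Wc a b j' :=
              mul_le_mul_of_nonneg_left b1 (by positivity)
            have c2 : ((j' : ℤ) + 2) * Wc a b k' ≤ ((j' : ℤ) + 2) * Wc a b (j' + 1) :=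
              mul_le_mul_of_nonneg_left b2 (by positivity)
            linarith
  · -- decreasing pairs: k + j = a + b + 1, k ≤ j
    intro k j hsum hkj
    rcases eq_or_lt_of_le hkj with heq | hlt
    · subst heq; exact le_refl _
    cases j with
    | zero => omega
    | succ j' =>
        cases k with
        | zero =>
            -- j = a + b + 1 : top coefficient vanishes
            have hj' : j' = a + b := by omega
            subst hj'
            rw [recB, Wc_support a b (a + b + 1) (by omega)]
            have e1 : ((a : ℤ) + b - ((a + b : ℕ) : ℤ)) = 0 := by push_cast; ring
            rw [e1]
            simpa using Wc_nonneg a (b + 1) 0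
        | succ k' =>
            rw [recB, recB]
            have hsum' : k' + j' + 1 = a + b := by omega
            have b1 := h.2 k' (j' + 1) (by omega) (by omega)
            have b2 := h.2 (k' + 1) j' (by omega) (by omega)
            have binc : Wc a b k' ≤ Wc a b (k' + 1) := good_inc h k' (by omega)
            have e1 : ((a : ℤ) + b - j') = (k' : ℤ) + 1 := by omega
            have e2 : ((a : ℤ) + b - k') = (j' : ℤ) + 1 := by omega
            rw [e1, e2]
            have c1 : ((j' : ℤ) + 2) * Wc a b (j' + 1) ≤ ((j' : ℤ) + 2) * Wc a b k' :=
              mul_le_mul_of_nonneg_left b1 (by positivity)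
            have c2 : ((k' : ℤ) + 1) * Wc a b j' ≤ ((k' : ℤ) + 1) * Wc a b (k' + 1) :=
              mul_le_mul_of_nonneg_left b2 (by positivity)
            nlinarith [binc]

lemma stepA_inc {a b : ℕ} (hab : a < b) (h : GoodW a b) :
    ∀ k j : ℕ, k + j + 1 = (a + 1) + b → k ≤ j → Wc (a + 1) b k ≤ Wc (a + 1) b j := by
  intro k j hsum hkj
  rcases eq_or_lt_of_le hkj with heq | hlt
  · subst heq; exact le_refl _
  cases j with
  | zero => omega
  | succ j' =>
      cases k with
      | zero =>
          rw [Wc_zero, zero_pow (by omega)]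
          exact Wc_nonneg (a + 1) b (j' + 1)
      | succ k' =>
          rw [recA, recA]
          have hsum' : k' + j' + 2 = a + b := by omega
          have b1 := h.1 (k' + 1) j' (by omega) (by omega)
          have b2 := h.1 k' (j' + 1) (by omega) (by omega)
          have bdec : Wc a b (j' + 1) ≤ Wc a b j' := good_dec h j' (by omega)
          have e1 : ((a : ℤ) + b + 1 - k') = (j' : ℤ) + 3 := by omega
          have e2 : ((a : ℤ) + b + 1 - j') = (k' : ℤ) + 3 := by omega
          rw [e1, e2]
          have c1 : ((k' : ℤ) + 1) * Wc a b (k' + 1) ≤ ((k' : ℤ) + 1) * Wc a b j' :=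
            mul_le_mul_of_nonneg_left b1 (by positivity)
          have c2 : ((j' : ℤ) + 3) * Wc a b k' ≤ ((j' : ℤ) + 3) * Wc a b (j' + 1) :=
            mul_le_mul_of_nonneg_left b2 (by positivity)
          nlinarith [bdec]

lemma GoodW_all : ∀ d a b : ℕ, a + b = d → a ≤ b → GoodW a b := by
  intro d
  induction d using Nat.strong_induction_on with
  | _ d ih =>
      intro a b hd hab
      rcases Nat.eq_zero_or_pos d with h0 | h0
      · have ha : a = 0 := by omega
        have hb : b = 0 := by omega
        subst ha; subst hb
        constructor
        · intro k j hsum; omega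
        · intro k j hsum hkj
          have hk : k = 0 := by omega
          have hj : j = 0 := by omega
          subst hk; subst hj; exact le_refl _
      · rcases lt_or_eq_of_le hab with hlt | heq
        · -- a < b, so b = b' + 1 and use stepB
          cases b with
          | zero => omega
          | succ b' =>
              exact stepB (by omega) (ih (d - 1) (by omega) a b' (by omega) (by omega))
        · -- a = b ≥ 1 : use stepA and symmetry
          cases a with
          | zero => omega
          | succ a' =>
              have hprev : GoodW a' b := ih (d - 1) (by omega) a' b (by omega) (by omega)
              constructor
              · exact stepA_inc (by omega) hprev
              · intro k j hsum hkj
                have hsymm : Wc (a' + 1) b j = Wc b (a' + 1) k := Wc_symm _ _ _ _ (by omega)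
                rw [hsymm, ← heq]

lemma Wc_inc (a b k : ℕ) (h : 2 * k + 2 ≤ a + b) : Wc a b k ≤ Wc a b (k + 1) := by
  rcases le_or_gt a b with hab | hab
  · exact good_inc (GoodW_all (a + b) a b rfl hab) k h
  · have h1 : Wc a b k = Wc b a (a + b - k) := Wc_symm a b k (a + b - k) (by omega)
    have h2 : Wc a b (k + 1) = Wc b a (a + b - k - 1) := Wc_symm a b (k + 1) _ (by omega)
    rw [h1, h2]
    have hg := GoodW_all (b + a) b a rfl (by omega)
    have := good_dec hg (a + b - k - 1) (by omega)
    have heq : a + b - k - 1 + 1 = a + b - k := by omega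
    rw [heq] at this
    exact this

lemma Wc_dec (a b k : ℕ) (h : a + b ≤ 2 * k) : Wc a b (k + 1) ≤ Wc a b k := by
  rcases le_or_gt a b with hab | hab
  · exact good_dec (GoodW_all (a + b) a b rfl hab) k (by omega)
  · rcases le_or_gt (a + b) k with hc | hc
    · rw [Wc_support a b (k + 1) (by omega)]
      exact Wc_nonneg a b k
    · have h1 : Wc a b k = Wc b a (a + b - k) := Wc_symm a b k (a + b - k) (by omega)
      have h2 : Wc a b (k + 1) = Wc b a (a + b - k - 1) := Wc_symm a b (k + 1) _ (by omega)
      rw [h1, h2]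
      have hg := GoodW_all (b + a) b a rfl (by omega)
      have := good_inc hg (a + b - k - 1) (by omega)
      have heq : a + b - k - 1 + 1 = a + b - k := by omega
      rw [heq] at this
      exact this

section Counting

variable {m r : ℕ} (v : Fin (r + 1) → Fin m → ℤ)

def InSpanV (x : Fin m → ℤ) : Prop :=
  ∃ lam : Fin (r + 1) → ℝ, ∀ j, (x j : ℝ) = ∑ i, lam i * (v i j : ℝ)

variable (hv : LinearIndependent ℝ (fun i => fun j => (v i j : ℝ)))

include hv in
lemma lam_unique {lam lam' : Fin (r + 1) → ℝ}
    (h : ∀ j, ∑ i, lam i * (v i j : ℝ) = ∑ i, lam' i * (v i j : ℝ)) : lam = lam' := by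
  have key := (Fintype.linearIndependent_iff.mp hv) (fun i => lam i - lam' i) ?_
  · funext i
    have := key i
    linarith [this]
  · funext j
    rw [Finset.sum_apply]
    simp only [Pi.smul_apply, smul_eq_mul, sub_mul]
    rw [Finset.sum_sub_distrib]
    have := h j
    simp only [Pi.zero_apply]
    linarith [this]

open scoped Classical in
noncomputable def lamOfV (x : Fin m → ℤ) : Fin (r + 1) → ℝ :=
  if h : InSpanV v x then h.choose else 0

lemma lamOfV_spec {x : Fin m → ℤ} (h : InSpanV v x) :
    ∀ j, (x j : ℝ) = ∑ i, lamOfV v x i * (v i j : ℝ) := by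
  rw [lamOfV]
  rw [dif_pos h]
  exact h.choose_spec

include hv in
lemma lamOfV_eq {x : Fin m → ℤ} {lam : Fin (r + 1) → ℝ}
    (h : ∀ j, (x j : ℝ) = ∑ i, lam i * (v i j : ℝ)) : lamOfV v x = lam := by
  have hx : InSpanV v x := ⟨lam, h⟩
  apply lam_unique v hv
  intro j
  rw [← lamOfV_spec v hx j, ← h j]

def SnV (n : ℕ) : Set (Fin m → ℤ) :=
  {x : Fin m → ℤ | ∃ lam : Fin (r + 1) → ℝ,
    (∀ i, 0 ≤ lam i ∧ lam i ≤ (n : ℝ)) ∧ ∀ j, (x j : ℝ) = ∑ i, lam i * (v i j : ℝ)}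

lemma SnV_finite (n : ℕ) : (SnV v n).Finite := by
  apply Set.Finite.subset (Set.finite_Icc
    (fun j => -((n : ℤ) * ∑ i, |v i j|)) (fun j => (n : ℤ) * ∑ i, |v i j|))
  rintro x ⟨lam, hlam, hx⟩
  have key : ∀ j, |x j| ≤ (n : ℤ) * ∑ i, |v i j| := by
    intro j
    have hr : |(x j : ℝ)| ≤ (n : ℝ) * ∑ i, |(v i j : ℝ)| := by
      rw [hx j]
      calc |∑ i, lam i * (v i j : ℝ)| ≤ ∑ i, |lam i * (v i j : ℝ)| :=
            Finset.abs_sum_le_sum_abs _ _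
        _ ≤ ∑ i, (n : ℝ) * |(v i j : ℝ)| := by
            apply Finset.sum_le_sum
            intro i _
            rw [abs_mul]
            apply mul_le_mul_of_nonneg_right _ (abs_nonneg _)
            rw [abs_of_nonneg (hlam i).1]
            exact (hlam i).2
        _ = (n : ℝ) * ∑ i, |(v i j : ℝ)| := by rw [Finset.mul_sum]
    have : ((|x j| : ℤ) : ℝ) ≤ (((n : ℤ) * ∑ i, |v i j| : ℤ) : ℝ) := by
      push_cast
      exact hr
    exact_mod_cast this
  constructor
  · intro j
    have := key j
    have h2 := abs_le.mp this
    exact h2.1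
  · intro j
    exact (abs_le.mp (key j)).2

open scoped Classical in
noncomputable def FsetV : Set (Fin m → ℤ) :=
  {y : Fin m → ℤ | InSpanV v y ∧ ∀ i, 0 ≤ lamOfV v y i ∧ lamOfV v y i < 1}

lemma FsetV_finite : (FsetV v).Finite := by
  apply Set.Finite.subset (SnV_finite v 1)
  rintro y ⟨hy, hb⟩
  exact ⟨lamOfV v y, fun i => ⟨(hb i).1, by
    have := (hb i).2
    push_cast
    linarith⟩, lamOfV_spec v hy⟩

open scoped Classical in
noncomputable def zV (y : Fin m → ℤ) : ℕ :=
  (Finset.univ.filter (fun i : Fin (r + 1) => lamOfV v y i = 0)).card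

lemma zV_le (y : Fin m → ℤ) : zV v y ≤ r + 1 := by
  classical
  calc zV v y ≤ (Finset.univ : Finset (Fin (r + 1))).card := by
        rw [zV]
        convert Finset.card_filter_le _ _
    _ = r + 1 := by simp

noncomputable def phiV (x : Fin m → ℤ) : Fin m → ℤ :=
  fun j => x j - ∑ i, ⌊lamOfV v x i⌋ * v i j

include hv in
lemma lamOfV_mem {n : ℕ} {x : Fin m → ℤ} (hx : x ∈ SnV v n) :
    ∀ i, 0 ≤ lamOfV v x i ∧ lamOfV v x i ≤ (n : ℝ) := by
  obtain ⟨lam, hb, he⟩ := hx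
  rw [lamOfV_eq v hv he]
  exact hb

include hv in
lemma phiV_lam {x : Fin m → ℤ} (h : InSpanV v x) :
    lamOfV v (phiV v x) = fun i => Int.fract (lamOfV v x i) := by
  apply lamOfV_eq v hv
  intro j
  have hs := lamOfV_spec v h j
  simp only [phiV, Int.fract]
  push_cast
  rw [hs, ← Finset.sum_sub_distrib]
  apply Finset.sum_congr rfl
  intro i _
  ring

include hv in
lemma phiV_inSpan {x : Fin m → ℤ} (h : InSpanV v x) : InSpanV v (phiV v x) := by
  refine ⟨fun i => Int.fract (lamOfV v x i), ?_⟩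
  intro j
  have hs := lamOfV_spec v h j
  simp only [phiV, Int.fract]
  push_cast
  rw [hs, ← Finset.sum_sub_distrib]
  apply Finset.sum_congr rfl
  intro i _
  ring

include hv in
lemma phiV_mem {n : ℕ} {x : Fin m → ℤ} (hx : x ∈ SnV v n) : phiV v x ∈ FsetV v := by
  have hspan : InSpanV v x := by
    obtain ⟨lam, hb, he⟩ := hx
    exact ⟨lam, he⟩
  refine ⟨phiV_inSpan v hv hspan, ?_⟩
  intro i
  rw [phiV_lam v hv hspan]
  exact ⟨Int.fract_nonneg _, Int.fract_lt_one _⟩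

include hv in
lemma countV (n : ℕ) :
    (SnV v n).ncard = ∑ y ∈ (FsetV_finite v).toFinset,
      (n + 1) ^ (zV v y) * n ^ (r + 1 - zV v y) := by
  classical
  rw [Set.ncard_eq_toFinset_card (SnV v n) (SnV_finite v n)]
  rw [Finset.card_eq_sum_card_fiberwise (f := phiV v) (t := (FsetV_finite v).toFinset)
    (fun x hx => (Set.Finite.mem_toFinset _).mpr
      (phiV_mem v hv ((Set.Finite.mem_toFinset _).mp hx)))]
  apply Finset.sum_congr rfl
  intro y hyF
  have hy : y ∈ FsetV v := (Set.Finite.mem_toFinset _).mp hyF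
  set By : Finset (Fin (r + 1) → ℤ) := Fintype.piFinset
    (fun i => Finset.Icc (0 : ℤ) (if lamOfV v y i = 0 then (n : ℤ) else (n : ℤ) - 1)) with hBy
  have hcard : By.card = ((SnV_finite v n).toFinset.filter (fun x => phiV v x = y)).card := by
    apply Finset.card_bij (fun a _ => fun j => y j + ∑ i, a i * v i j)
    · -- maps into the fiber
      intro a ha
      rw [Fintype.mem_piFinset] at ha
      have hbnd : ∀ i, 0 ≤ a i ∧ a i ≤ (if lamOfV v y i = 0 then (n : ℤ) else (n : ℤ) - 1) := by
        intro i
        have := ha i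
        rw [Finset.mem_Icc] at this
        exact this
      set x : Fin m → ℤ := fun j => y j + ∑ i, a i * v i j with hx
      have hxspec : ∀ j, (x j : ℝ) = ∑ i, (lamOfV v y i + (a i : ℝ)) * (v i j : ℝ) := by
        intro j
        have hs := lamOfV_spec v hy.1 j
        simp only [hx]
        push_cast
        rw [hs, ← Finset.sum_add_distrib]
        apply Finset.sum_congr rfl
        intro i _
        ring
      have hxSn : x ∈ SnV v n := by
        refine ⟨fun i => lamOfV v y i + (a i : ℝ), ?_, hxspec⟩
        intro i
        have h0 := (hy.2 i).1
        have h1 := (hy.2 i).2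
        have hb := hbnd i
        have ha0 : (0 : ℝ) ≤ (a i : ℝ) := by exact_mod_cast hb.1
        show 0 ≤ lamOfV v y i + (a i : ℝ) ∧ lamOfV v y i + (a i : ℝ) ≤ (n : ℝ)
        constructor
        · linarith
        · by_cases hz : lamOfV v y i = 0
          · rw [if_pos hz] at hb
            have h2 : (a i : ℝ) ≤ (n : ℝ) := by exact_mod_cast hb.2
            rw [hz]
            linarith
          · rw [if_neg hz] at hb
            have h2 : (a i : ℝ) ≤ (n : ℝ) - 1 := by
              have h3 := hb.2
              have : ((a i : ℤ) : ℝ) ≤ (((n : ℤ) - 1 : ℤ) : ℝ) := by exact_mod_cast h3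
              push_cast at this
              linarith
            linarith
      have hlamx : lamOfV v x = fun i => lamOfV v y i + (a i : ℝ) := lamOfV_eq v hv hxspec
      rw [Finset.mem_filter]
      refine ⟨(Set.Finite.mem_toFinset _).mpr hxSn, ?_⟩
      funext j
      simp only [phiV, hlamx]
      have hfl : ∀ i, ⌊lamOfV v y i + (a i : ℝ)⌋ = a i := by
        intro i
        rw [Int.floor_add_intCast]
        have : ⌊lamOfV v y i⌋ = 0 := by
          rw [Int.floor_eq_zero_iff]
          exact ⟨(hy.2 i).1, (hy.2 i).2⟩
        omega
      have : ∑ i, ⌊lamOfV v y i + (a i : ℝ)⌋ * v i j = ∑ i, a i * v i j := by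
        apply Finset.sum_congr rfl
        intro i _
        rw [hfl i]
      rw [this]
      simp only [hx]
      ring
    · -- injective
      intro a₁ ha₁ a₂ ha₂ heq
      have hsum : ∀ j, ∑ i, (a₁ i : ℝ) * (v i j : ℝ) = ∑ i, (a₂ i : ℝ) * (v i j : ℝ) := by
        intro j
        have := congrFun heq j
        have h2 : ∑ i, a₁ i * v i j = ∑ i, a₂ i * v i j := by omega
        exact_mod_cast congrArg (fun z : ℤ => (z : ℝ)) h2
      have := lam_unique v hv hsum
      funext i
      have := congrFun this i
      exact_mod_cast this
    · -- surjective
      intro b hb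
      rw [Finset.mem_filter] at hb
      obtain ⟨hbT, hphib⟩ := hb
      have hbSn : b ∈ SnV v n := (Set.Finite.mem_toFinset _).mp hbT
      have hbspan : InSpanV v b := by
        obtain ⟨lam, _, he⟩ := hbSn
        exact ⟨lam, he⟩
      have hblam := lamOfV_mem v hv hbSn
      have hylam : lamOfV v y = fun i => Int.fract (lamOfV v b i) := by
        rw [← hphib]
        exact phiV_lam v hv hbspan
      refine ⟨fun i => ⌊lamOfV v b i⌋, ?_, ?_⟩
      · rw [Fintype.mem_piFinset]
        intro i
        rw [Finset.mem_Icc]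
        constructor
        · exact Int.le_floor.mpr (by exact_mod_cast (hblam i).1)
        · have hfn : ⌊lamOfV v b i⌋ ≤ n := by
            have := Int.floor_le_floor (hblam i).2
            rwa [Int.floor_natCast] at this
          by_cases hz : lamOfV v y i = 0
          · rw [if_pos hz]; exact hfn
          · rw [if_neg hz]
            have hfr : Int.fract (lamOfV v b i) ≠ 0 := by
              rw [hylam] at hz
              exact hz
            by_contra hcon
            push_neg at hcon
            have hfe : ⌊lamOfV v b i⌋ = n := by omega
            have : lamOfV v b i = (n : ℝ) := by
              have hle := (hblam i).2
              have hge : ((n : ℤ) : ℝ) ≤ lamOfV v b i := by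
                rw [← hfe]
                exact Int.floor_le _
              push_cast at hge
              linarith
            rw [Int.fract, this] at hfr
            apply hfr
            rw [Int.floor_natCast]
            push_cast
            ring
      · funext j
        have : y j = b j - ∑ i, ⌊lamOfV v b i⌋ * v i j := by
          rw [← hphib]
          rfl
        rw [this]
        ring
  rw [← hcard, hBy, Fintype.card_piFinset]
  have hfac : ∀ i : Fin (r + 1),
      (Finset.Icc (0 : ℤ) (if lamOfV v y i = 0 then (n : ℤ) else (n : ℤ) - 1)).card
        = if lamOfV v y i = 0 then n + 1 else n := by
    intro i
    rw [Int.card_Icc]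
    split_ifs <;> omega
  calc ∏ i, (Finset.Icc (0 : ℤ)
        (if lamOfV v y i = 0 then (n : ℤ) else (n : ℤ) - 1)).card
      = ∏ i : Fin (r + 1), (if lamOfV v y i = 0 then n + 1 else n) := by
        apply Finset.prod_congr rfl
        intro i _
        exact hfac i
    _ = (n + 1) ^ (zV v y) * n ^ (r + 1 - zV v y) := by
        rw [Finset.prod_ite (fun _ => n + 1) (fun _ => n), Finset.prod_const, Finset.prod_const]
        have h1 : (Finset.univ.filter (fun i : Fin (r + 1) => lamOfV v y i = 0)).card
            = zV v y := by
          rw [zV]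
        have h2 : (Finset.univ.filter (fun i : Fin (r + 1) => ¬(lamOfV v y i = 0))).card
            = r + 1 - zV v y := by
          have h3 := Finset.card_filter_add_card_filter_not
            (s := (Finset.univ : Finset (Fin (r + 1)))) (p := fun i => lamOfV v y i = 0)
          rw [h1] at h3
          simp only [Finset.card_univ, Fintype.card_fin] at h3
          omega
        rw [h1, h2]


include hv in
lemma D_eq_sum_Wc (c : ℕ) :
    (PowerSeries.coeff (R := ℤ) c ((1 - PowerSeries.X) ^ (r + 2) *
      PowerSeries.mk (fun n : ℕ => ((SnV v n).ncard : ℤ))))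
      = ∑ y ∈ (FsetV_finite v).toFinset, Wc (r + 1 - zV v y) (zV v y) c := by
  classical
  have hmk : PowerSeries.mk (fun n : ℕ => ((SnV v n).ncard : ℤ))
      = ∑ y ∈ (FsetV_finite v).toFinset,
          PowerSeries.mk (fun n : ℕ =>
            (n : ℤ) ^ (r + 1 - zV v y) * ((n : ℤ) + 1) ^ (zV v y)) := by
    apply PowerSeries.ext
    intro n
    rw [PowerSeries.coeff_mk, map_sum]
    rw [countV v hv n]
    push_cast
    apply Finset.sum_congr rfl
    intro y _
    rw [PowerSeries.coeff_mk]
    ring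
  rw [hmk, Finset.mul_sum, map_sum]
  apply Finset.sum_congr rfl
  intro y _
  have hz : zV v y ≤ r + 1 := zV_le v y
  have he : (r + 1 - zV v y) + zV v y + 1 = r + 2 := by omega
  rw [Wc, he]

include hv in
theorem main_unimodal (D : ℕ → ℤ)
    (hD : ∀ c : ℕ, D c = PowerSeries.coeff (R := ℤ) c ((1 - PowerSeries.X) ^ (r + 2) *
      PowerSeries.mk (fun n : ℕ => ((SnV v n).ncard : ℤ)))) :
    ∃ p : ℕ, (∀ a, a < p → D a ≤ D (a + 1)) ∧ (∀ a, p ≤ a → D (a + 1) ≤ D a) := by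
  classical
  have hDW : ∀ c, D c = ∑ y ∈ (FsetV_finite v).toFinset, Wc (r + 1 - zV v y) (zV v y) c :=
    fun c => (hD c).trans (D_eq_sum_Wc v hv c)
  set q := (r + 1) / 2 with hq
  have hinc : ∀ a, a < q → D a ≤ D (a + 1) := by
    intro a ha
    rw [hDW a, hDW (a + 1)]
    apply Finset.sum_le_sum
    intro y _
    apply Wc_inc
    have hz : zV v y ≤ r + 1 := zV_le v y
    omega
  have hdec : ∀ a, q + 1 ≤ a → D (a + 1) ≤ D a := by
    intro a ha
    rw [hDW a, hDW (a + 1)]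
    apply Finset.sum_le_sum
    intro y _
    apply Wc_dec
    have hz : zV v y ≤ r + 1 := zV_le v y
    omega
  by_cases hmid : D q ≤ D (q + 1)
  · refine ⟨q + 1, ?_, ?_⟩
    · intro a ha
      rcases Nat.lt_or_ge a q with h | h
      · exact hinc a h
      · have : a = q := by omega
        subst this
        exact hmid
    · intro a ha
      exact hdec a ha
  · refine ⟨q, ?_, ?_⟩
    · intro a ha
      exact hinc a ha
    · intro a ha
      rcases Nat.lt_or_ge a (q + 1) with h | h
      · have : a = q := by omega
        subst this
        linarith [lt_of_not_ge hmid]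
      · exact hdec a h

end Counting

/-- The δ-vector of a lattice parallelepiped is unimodal: if
`◊P = {∑ λ_i v_i : 0 ≤ λ_i ≤ 1}` is the parallelepiped spanned by linearly
independent lattice vectors `v_0,…,v_r` in `ℤ^m`, then the coefficients of
`δ(◊P,t) = (1-t)^{r+2} ∑_{n≥0} #(n◊P ∩ ℤ^m) t^n` form a unimodal sequence. -/
theorem delta_parallelepiped_unimodal (m r : ℕ)
    (v : Fin (r + 1) → Fin m → ℤ)
    (hv : LinearIndependent ℝ (fun i => fun j => (v i j : ℝ))) :
    ∀ D : ℕ → ℤ,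
      (∀ c : ℕ,
        D c = PowerSeries.coeff (R := ℤ) c ((1 - PowerSeries.X) ^ (r + 2) *
          PowerSeries.mk (fun n : ℕ =>
            (Set.ncard {x : Fin m → ℤ | ∃ lam : Fin (r + 1) → ℝ,
              (∀ i, 0 ≤ lam i ∧ lam i ≤ (n : ℝ)) ∧
              ∀ j, (x j : ℝ) = ∑ i, lam i * (v i j : ℝ)} : ℤ)))) →
      ∃ p : ℕ, (∀ a, a < p → D a ≤ D (a + 1)) ∧ (∀ a, p ≤ a → D (a + 1) ≤ D a) := by
  intro D hD
  exact main_unimodal v hv D hD
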